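/- arXiv:2404.09247 — 2 statements merged into one kernel-verified Lean document; each statement's English description precedes it below -/
import Mathlib

section
/- Under the two-region setup, for all x > θ it holds that |F(x) − F̂(x)| ≤ min(1−α, 1−m/n)·sup_{x' > θ} |K(x') − K̂(x')| + 2·|α − m/n|; consequently sup_{x > θ} |F(x) − F̂(x)| ≤ min(1−α, 1−m/n)·sup_{x > θ} |K(x) − K̂(x)| + 2·|α − m/n|. -/
/-- Disclosed-region lemma (two-region setup): for all `x > θ`,
`|F(x) − F̂(x)| ≤ min(1−α, 1−m/n) · sup_{x' > θ} |K(x') − K̂(x')| + 2·|α − m/n|`, and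
consequently the same bound holds for `sup_{x > θ} |F(x) − F̂(x)|`. -/
theorem disclosed_region_bound (θ α : ℝ) (hα : α ∈ Set.Ioo (0 : ℝ) 1)
    (m n k : ℕ) (hm : 0 < m) (hmn : m < n)
    (K Khat F Fhat : ℝ → ℝ)
    (hK : ∀ x, K x ∈ Set.Icc (0 : ℝ) 1) (hKhat : ∀ x, Khat x ∈ Set.Icc (0 : ℝ) 1)
    (hF : ∀ x ≥ θ, F x = α + (1 - α) * K x)
    (hFhat : ∀ x ≥ θ, Fhat x = (m : ℝ) / n + (((n : ℝ) - m) / n) * Khat x) :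
    (∀ x > θ, |F x - Fhat x| ≤
        min (1 - α) (1 - (m : ℝ) / n) * (⨆ x' : {x' : ℝ // x' > θ}, |K x' - Khat x'|)
          + 2 * |α - (m : ℝ) / n|) ∧
    (⨆ x : {x : ℝ // x > θ}, |F x - Fhat x|) ≤
        min (1 - α) (1 - (m : ℝ) / n) * (⨆ x : {x : ℝ // x > θ}, |K x - Khat x|)
          + 2 * |α - (m : ℝ) / n| := by
  obtain ⟨hα0, hα1⟩ := hα
  have hn : (0:ℝ) < n := by
    exact_mod_cast Nat.lt_of_le_of_lt (Nat.zero_le m) hmn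
  have hmn' : (m:ℝ)/n < 1 := by
    rw [div_lt_one hn]; exact_mod_cast hmn
  haveI : Nonempty {x' : ℝ // x' > θ} := ⟨⟨θ + 1, by linarith⟩⟩
  set a : ℝ := 1 - α with ha
  set b : ℝ := 1 - (m:ℝ)/n with hb
  set c : ℝ := min a b with hc
  have hc0 : 0 < c := lt_min (by rw [ha]; linarith) (by rw [hb]; linarith)
  have hbdd : BddAbove (Set.range fun x' : {x':ℝ // x' > θ} => |K x' - Khat x'|) := by
    refine ⟨2, ?_⟩
    rintro _ ⟨x, rfl⟩
    have h1 := hK x; have h2 := hKhat x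
    have := abs_sub (K x) (Khat x)
    rw [abs_of_nonneg h1.1, abs_of_nonneg h2.1] at this
    linarith [h1.2, h2.2]
  have hpt : ∀ x > θ, |F x - Fhat x| ≤
      c * (⨆ x' : {x' : ℝ // x' > θ}, |K x' - Khat x'|) + 2 * |α - (m : ℝ) / n| := by
    intro x hx
    have hxθ : x ≥ θ := le_of_lt hx
    have hrw : ((n:ℝ) - m)/n = b := by rw [hb, sub_div, div_self hn.ne']
    have hEq : F x - Fhat x
        = (α - (m:ℝ)/n) + c * (K x - Khat x) + ((a - c) * K x - (b - c) * Khat x) := by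
      rw [hF x hxθ, hFhat x hxθ, hrw]; ring
    have h1 := hK x; have h2 := hKhat x
    have hrem : |(a - c) * K x - (b - c) * Khat x| ≤ |α - (m:ℝ)/n| := by
      rcases le_total a b with h | h
      · have : c = a := min_eq_left h
        rw [this]
        have : |(a - a) * K x - (b - a) * Khat x| = (b - a) * Khat x := by
          rw [show (a - a) * K x - (b - a) * Khat x = -((b - a) * Khat x) by ring,
            abs_neg, abs_of_nonneg (mul_nonneg (by linarith) h2.1)]
        rw [this]
        have hab : b - a = α - (m:ℝ)/n := by rw [ha, hb]; ring
        calc (b - a) * Khat x ≤ (b - a) * 1 :=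
              mul_le_mul_of_nonneg_left h2.2 (by linarith)
          _ = α - (m:ℝ)/n := by rw [hab]; ring
          _ ≤ |α - (m:ℝ)/n| := le_abs_self _
      · have : c = b := min_eq_right h
        rw [this]
        have : |(a - b) * K x - (b - b) * Khat x| = (a - b) * K x := by
          rw [show (a - b) * K x - (b - b) * Khat x = (a - b) * K x by ring,
            abs_of_nonneg (mul_nonneg (by linarith) h1.1)]
        rw [this]
        have hab : a - b = (m:ℝ)/n - α := by rw [ha, hb]; ring
        calc (a - b) * K x ≤ (a - b) * 1 :=
              mul_le_mul_of_nonneg_left h1.2 (by linarith)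
          _ = (m:ℝ)/n - α := by rw [hab]; ring
          _ ≤ |α - (m:ℝ)/n| := by rw [abs_sub_comm]; exact le_abs_self _
    have hsup : |K x - Khat x| ≤ ⨆ x' : {x' : ℝ // x' > θ}, |K x' - Khat x'| :=
      le_ciSup hbdd ⟨x, hx⟩
    calc |F x - Fhat x|
        ≤ |α - (m:ℝ)/n| + |c * (K x - Khat x)| + |(a - c) * K x - (b - c) * Khat x| := by
          rw [hEq]; exact (abs_add_le _ _).trans (by gcongr; exact abs_add_le _ _)
      _ ≤ |α - (m:ℝ)/n| + c * (⨆ x' : {x' : ℝ // x' > θ}, |K x' - Khat x'|)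
            + |α - (m:ℝ)/n| := by
          gcongr
          rw [abs_mul, abs_of_pos hc0]
          exact mul_le_mul_of_nonneg_left hsup hc0.le
      _ = c * (⨆ x' : {x' : ℝ // x' > θ}, |K x' - Khat x'|) + 2 * |α - (m:ℝ)/n| := by ring
  refine ⟨hpt, ciSup_le fun ⟨x, hx⟩ => hpt x hx⟩
end

section
/- Let n₀, n₁ be positive integers with n = n₀ + n₁, let p₀ ∈ [0,1] and p₁ = 1 − p₀, and for y ∈ {0,1} let F^y : ℝ → [0,1] and F̂^y : ℝ → [0,1] be arbitrary functions. Define the expected risk R(θ) = p₁·F¹(θ) + p₀·(1 − F⁰(θ)) and the empirical risk R_emp(θ) = (n₁/n)·F̂¹(θ) + (n₀/n)·(1 − F̂⁰(θ)). Then for every θ̂ ∈ ℝ (in particular for any minimizer of R_emp): |R(θ̂) − R_emp(θ̂)| ≤ 3·|p₀ − n₀/n| + Σ_{y ∈ {0,1}} min(p_y, n_y/n) · sup_{θ ∈ ℝ} |F^y(θ) − F̂^y(θ)|. -/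
private lemma weight_split (a b u v : ℝ) (ha : 0 ≤ a) (hb : 0 ≤ b)
    (hu : u ∈ Set.Icc (0 : ℝ) 1) (hv : v ∈ Set.Icc (0 : ℝ) 1) :
    |a * u - b * v| ≤ |a - b| + min a b * |u - v| := by
  rcases le_total a b with h | h
  · rw [min_eq_left h]
    have hsplit : a * u - b * v = (a - b) * v + a * (u - v) := by ring
    calc |a * u - b * v| = |(a - b) * v + a * (u - v)| := by rw [hsplit]
      _ ≤ |(a - b) * v| + |a * (u - v)| := abs_add_le _ _
      _ = |a - b| * |v| + a * |u - v| := by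
          rw [abs_mul, abs_mul, abs_of_nonneg ha]
      _ ≤ |a - b| * 1 + a * |u - v| := by
          gcongr
          exact abs_le.mpr ⟨by linarith [hv.1], hv.2⟩
      _ = |a - b| + a * |u - v| := by ring
  · rw [min_eq_right h]
    have hsplit : a * u - b * v = (a - b) * u + b * (u - v) := by ring
    calc |a * u - b * v| = |(a - b) * u + b * (u - v)| := by rw [hsplit]
      _ ≤ |(a - b) * u| + |b * (u - v)| := abs_add_le _ _
      _ = |a - b| * |u| + b * |u - v| := by
          rw [abs_mul, abs_mul, abs_of_nonneg hb]
      _ ≤ |a - b| * 1 + b * |u - v| := by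
          gcongr
          exact abs_le.mpr ⟨by linarith [hu.1], hu.2⟩
      _ = |a - b| + b * |u - v| := by ring

/-- Deterministic generalization-error inequality for a threshold classifier under 0-1
loss: the gap between the expected risk `R` and the empirical risk `R_emp` is bounded by
three times the label-proportion estimation error plus the label-weighted CDF estimation
errors. -/
theorem generalization_error_bound (n₀ n₁ n : ℕ) (h₀ : 0 < n₀) (h₁ : 0 < n₁)
    (hn : n = n₀ + n₁)
    (p₀ p₁ : ℝ) (hp₀ : p₀ ∈ Set.Icc (0 : ℝ) 1) (hp₁ : p₁ = 1 - p₀)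
    (F0 F1 Fhat0 Fhat1 : ℝ → ℝ)
    (hF0 : ∀ x, F0 x ∈ Set.Icc (0 : ℝ) 1) (hF1 : ∀ x, F1 x ∈ Set.Icc (0 : ℝ) 1)
    (hFhat0 : ∀ x, Fhat0 x ∈ Set.Icc (0 : ℝ) 1) (hFhat1 : ∀ x, Fhat1 x ∈ Set.Icc (0 : ℝ) 1)
    (R Remp : ℝ → ℝ)
    (hR : ∀ θ, R θ = p₁ * F1 θ + p₀ * (1 - F0 θ))
    (hRemp : ∀ θ, Remp θ = ((n₁ : ℝ) / n) * Fhat1 θ + ((n₀ : ℝ) / n) * (1 - Fhat0 θ))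
    (θhat : ℝ) :
    |R θhat - Remp θhat| ≤ 3 * |p₀ - (n₀ : ℝ) / n|
      + (min p₀ ((n₀ : ℝ) / n) * (⨆ θ : ℝ, |F0 θ - Fhat0 θ|)
        + min p₁ ((n₁ : ℝ) / n) * (⨆ θ : ℝ, |F1 θ - Fhat1 θ|)) := by
  have hnpos : (0 : ℝ) < n := by
    have : 0 < n := by omega
    exact_mod_cast this
  set q₀ : ℝ := (n₀ : ℝ) / n with hq₀def
  set q₁ : ℝ := (n₁ : ℝ) / n with hq₁def
  have hq₀ : 0 ≤ q₀ := by positivity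
  have hq₁ : 0 ≤ q₁ := by positivity
  have hqsum : q₀ + q₁ = 1 := by
    rw [hq₀def, hq₁def, ← add_div, div_eq_one_iff_eq hnpos.ne', hn, Nat.cast_add]
  set S₀ : ℝ := ⨆ θ : ℝ, |F0 θ - Fhat0 θ| with hS₀def
  set S₁ : ℝ := ⨆ θ : ℝ, |F1 θ - Fhat1 θ| with hS₁def
  have hbdd₀ : BddAbove (Set.range fun θ => |F0 θ - Fhat0 θ|) := by
    refine ⟨1, ?_⟩
    rintro x ⟨θ, rfl⟩
    have h1 := hF0 θ; have h2 := hFhat0 θ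
    rw [abs_le]
    constructor <;> [linarith [h1.1, h2.2]; linarith [h1.2, h2.1]]
  have hbdd₁ : BddAbove (Set.range fun θ => |F1 θ - Fhat1 θ|) := by
    refine ⟨1, ?_⟩
    rintro x ⟨θ, rfl⟩
    have h1 := hF1 θ; have h2 := hFhat1 θ
    rw [abs_le]
    constructor <;> [linarith [h1.1, h2.2]; linarith [h1.2, h2.1]]
  have hS₀le : |F0 θhat - Fhat0 θhat| ≤ S₀ := le_ciSup hbdd₀ θhat
  have hS₁le : |F1 θhat - Fhat1 θhat| ≤ S₁ := le_ciSup hbdd₁ θhat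
  have habs_eq : |p₁ - q₁| = |p₀ - q₀| := by
    have : p₁ - q₁ = -(p₀ - q₀) := by rw [hp₁]; linarith
    rw [this, abs_neg]
  have hp₁nn : 0 ≤ p₁ := by rw [hp₁]; linarith [hp₀.2]
  have hone : ∀ x, x ∈ Set.Icc (0 : ℝ) 1 → (1 - x) ∈ Set.Icc (0 : ℝ) 1 := by
    intro x hx
    exact ⟨by linarith [hx.2], by linarith [hx.1]⟩
  have hA := weight_split p₁ q₁ (F1 θhat) (Fhat1 θhat) hp₁nn hq₁ (hF1 θhat) (hFhat1 θhat)
  have hB := weight_split p₀ q₀ (1 - F0 θhat) (1 - Fhat0 θhat) hp₀.1 hq₀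
    (hone _ (hF0 θhat)) (hone _ (hFhat0 θhat))
  have hB' : |(1 - F0 θhat) - (1 - Fhat0 θhat)| = |F0 θhat - Fhat0 θhat| := by
    rw [show (1 - F0 θhat) - (1 - Fhat0 θhat) = Fhat0 θhat - F0 θhat from by ring,
      abs_sub_comm]
  rw [hB'] at hB
  have hmin₀ : 0 ≤ min p₀ q₀ := le_min hp₀.1 hq₀
  have hmin₁ : 0 ≤ min p₁ q₁ := le_min hp₁nn hq₁
  have key : |R θhat - Remp θhat| ≤
      |p₁ - q₁| + min p₁ q₁ * |F1 θhat - Fhat1 θhat|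
        + (|p₀ - q₀| + min p₀ q₀ * |F0 θhat - Fhat0 θhat|) := by
    rw [hR, hRemp]
    calc |p₁ * F1 θhat + p₀ * (1 - F0 θhat) - (q₁ * Fhat1 θhat + q₀ * (1 - Fhat0 θhat))|
        = |(p₁ * F1 θhat - q₁ * Fhat1 θhat)
            + (p₀ * (1 - F0 θhat) - q₀ * (1 - Fhat0 θhat))| := by ring_nf
      _ ≤ |p₁ * F1 θhat - q₁ * Fhat1 θhat|
            + |p₀ * (1 - F0 θhat) - q₀ * (1 - Fhat0 θhat)| := abs_add_le _ _
      _ ≤ _ := add_le_add hA hB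
  calc |R θhat - Remp θhat|
      ≤ |p₁ - q₁| + min p₁ q₁ * |F1 θhat - Fhat1 θhat|
        + (|p₀ - q₀| + min p₀ q₀ * |F0 θhat - Fhat0 θhat|) := key
    _ ≤ |p₀ - q₀| + min p₁ q₁ * S₁ + (|p₀ - q₀| + min p₀ q₀ * S₀) := by
        rw [habs_eq]; gcongr
    _ ≤ 3 * |p₀ - q₀| + (min p₀ q₀ * S₀ + min p₁ q₁ * S₁) := by
        have := abs_nonneg (p₀ - q₀); linarith
end
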